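/- Let k be a field, A a k-algebra, and R ∈ A⊗A a unitary invertible solution of the pentagon equation, with P = P(A,R) and H = H(A,R) the Hopf algebras on R_(l) and R_(r). Then the k-linear map f : P* → H defined by f(p*) = Σ ⟨p*, R¹⟩R² is an isomorphism of Hopf algebras from the dual Hopf algebra P* onto H. -/

import Mathlib

open TensorProduct

set_option maxHeartbeats 1000000
set_option synthInstance.maxHeartbeats 200000

namespace PentagonPaper

section Pentagon

variable (k : Type*) [Field k] (A : Type*) [Ring A] [Algebra k A]

/-- `x ⊗ y ↦ x ⊗ y ⊗ 1` -/
noncomputable def leg12 : A ⊗[k] A →ₐ[k] A ⊗[k] (A ⊗[k] A) :=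
  Algebra.TensorProduct.map (AlgHom.id k A) Algebra.TensorProduct.includeLeft

/-- `x ⊗ y ↦ x ⊗ 1 ⊗ y` -/
noncomputable def leg13 : A ⊗[k] A →ₐ[k] A ⊗[k] (A ⊗[k] A) :=
  Algebra.TensorProduct.map (AlgHom.id k A) Algebra.TensorProduct.includeRight

/-- `x ⊗ y ↦ 1 ⊗ x ⊗ y` -/
noncomputable def leg23 : A ⊗[k] A →ₐ[k] A ⊗[k] (A ⊗[k] A) :=
  Algebra.TensorProduct.includeRight

variable {k A}

/-- The pentagon equation `R¹²R¹³R²³ = R²³R¹²`. -/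
def IsPentagon (R : A ⊗[k] A) : Prop :=
  leg12 k A R * leg13 k A R * leg23 k A R = leg23 k A R * leg12 k A R

/-- `φ ↦ (id ⊗ φ)(R)`, i.e. the map sending a functional to the corresponding
left coefficient of `R`. -/
noncomputable def lCoefMap (R : A ⊗[k] A) : Module.Dual k A →ₗ[k] A :=
  (TensorProduct.rid k A).toLinearMap ∘ₗ LinearMap.applyₗ R ∘ₗ LinearMap.lTensorHom A

/-- `φ ↦ (φ ⊗ id)(R)`, i.e. the map sending a functional to the corresponding
right coefficient of `R`. -/
noncomputable def rCoefMap (R : A ⊗[k] A) : Module.Dual k A →ₗ[k] A :=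
  (TensorProduct.lid k A).toLinearMap ∘ₗ LinearMap.applyₗ R ∘ₗ LinearMap.rTensorHom A

/-- The space `R_(l)` of left coefficients of `R`. -/
noncomputable def lCoefs (R : A ⊗[k] A) : Submodule k A := LinearMap.range (lCoefMap R)

/-- The space `R_(r)` of right coefficients of `R`. -/
noncomputable def rCoefs (R : A ⊗[k] A) : Submodule k A := LinearMap.range (rCoefMap R)

/-- `R` is unitary if `1 ∈ R_(l) ∩ R_(r)`. -/
def IsUnitary (R : A ⊗[k] A) : Prop := (1 : A) ∈ lCoefs R ∧ (1 : A) ∈ rCoefs R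

/-- The length `l(R)`: the minimal `m` such that `R = ∑_{i=1}^m aᵢ ⊗ bᵢ`. -/
noncomputable def length (R : A ⊗[k] A) : ℕ :=
  sInf {m : ℕ | ∃ a b : Fin m → A, R = ∑ i, a i ⊗ₜ[k] b i}

/-- The left `R`-coinvariants `A^{R,l} = {a | R(a ⊗ 1) = a ⊗ 1}`. -/
noncomputable def lCoinv (R : A ⊗[k] A) : Submodule k A where
  carrier := {a : A | R * (a ⊗ₜ[k] (1 : A)) = a ⊗ₜ[k] (1 : A)}
  add_mem' := by
    intro a b ha hb
    simp only [Set.mem_setOf_eq, TensorProduct.add_tmul, mul_add] at *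
    rw [ha, hb]
  zero_mem' := by simp
  smul_mem' := by
    intro c a ha
    simp only [Set.mem_setOf_eq] at *
    rw [← TensorProduct.smul_tmul', mul_smul_comm, ha]

/-- The right `R`-coinvariants `A^{R,r} = {a | (1 ⊗ a)R = 1 ⊗ a}`. -/
noncomputable def rCoinv (R : A ⊗[k] A) : Submodule k A where
  carrier := {a : A | ((1 : A) ⊗ₜ[k] a) * R = (1 : A) ⊗ₜ[k] a}
  add_mem' := by
    intro a b ha hb
    simp only [Set.mem_setOf_eq, TensorProduct.tmul_add, add_mul] at *
    rw [ha, hb]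
  zero_mem' := by simp
  smul_mem' := by
    intro c a ha
    simp only [Set.mem_setOf_eq, TensorProduct.tmul_smul, smul_mul_assoc] at *
    rw [ha]

/-- The comultiplication `Δ_r : a ↦ R⁻¹(1 ⊗ a)R` on `A`. -/
noncomputable def deltaR (R : A ⊗[k] A) : A →ₗ[k] A ⊗[k] A where
  toFun a := Ring.inverse R * ((1 : A) ⊗ₜ[k] a) * R
  map_add' a b := by simp [TensorProduct.tmul_add, mul_add, add_mul]
  map_smul' c a := by simp [TensorProduct.tmul_smul, mul_smul_comm, smul_mul_assoc]

/-- The comultiplication `Δ_l : a ↦ R(a ⊗ 1)R⁻¹` on `A`. -/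
noncomputable def deltaL (R : A ⊗[k] A) : A →ₗ[k] A ⊗[k] A where
  toFun a := R * (a ⊗ₜ[k] (1 : A)) * Ring.inverse R
  map_add' a b := by simp [TensorProduct.add_tmul, mul_add, add_mul]
  map_smul' c a := by
    simp only [RingHom.id_apply]
    rw [← TensorProduct.smul_tmul', mul_smul_comm, smul_mul_assoc]

end Pentagon

section Realizes

variable {k : Type*} [Field k] {A : Type*} [Ring A] [Algebra k A]
variable {L : Type*} [Ring L] [HopfAlgebra k L]

/-- `f` realizes the Hopf algebra `L` as the Hopf algebra
`P(A,R) = ` (`R_(l)`, multiplication of `A`, `Δ_r(x) = R⁻¹(1⊗x)R`):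
`f` is an isomorphism of algebras from `L` onto the subalgebra `R_(l)` of `A`
transporting the comultiplication of `L` to `Δ_r`. -/
def RealizesP (R : A ⊗[k] A) (f : L →ₗ[k] A) : Prop :=
  Function.Injective f ∧ LinearMap.range f = lCoefs R ∧
    f 1 = 1 ∧ (∀ x y : L, f (x * y) = f x * f y) ∧
    ∀ x : L, TensorProduct.map f f (Coalgebra.comul x) =
      Ring.inverse R * ((1 : A) ⊗ₜ[k] f x) * R

/-- `f` realizes the Hopf algebra `L` as the Hopf algebra
`H(A,R) = ` (`R_(r)`, multiplication of `A`, `Δ_l(y) = R(y⊗1)R⁻¹`). -/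
def RealizesH (R : A ⊗[k] A) (f : L →ₗ[k] A) : Prop :=
  Function.Injective f ∧ LinearMap.range f = rCoefs R ∧
    f 1 = 1 ∧ (∀ x y : L, f (x * y) = f x * f y) ∧
    ∀ x : L, TensorProduct.map f f (Coalgebra.comul x) =
      R * (f x ⊗ₜ[k] (1 : A)) * Ring.inverse R

end Realizes

section Convolution

variable (k : Type u) [Field k] (L : Type v) [Ring L] [HopfAlgebra k L]

/-- The convolution product on the dual of the coalgebra `L`, as a linear map
`L* ⊗ L* → L*`: `(f ∗ g)(l) = f(l₍₁₎)g(l₍₂₎)`. -/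
noncomputable def convMul : Module.Dual k L ⊗[k] Module.Dual k L →ₗ[k] Module.Dual k L :=
  (Coalgebra.comul (R := k) (A := L)).dualMap ∘ₗ TensorProduct.dualDistrib k L L

end Convolution

section Eval

variable {k : Type u} [Field k] {P : Type v} [AddCommGroup P] [Module k P]
variable {A : Type w} [AddCommGroup A] [Module k A]

/-- Given `R' ∈ P ⊗ A`, the map `p* ↦ (p* ⊗ id)(R') = ∑ ⟨p*, R'¹⟩ R'²`. -/
noncomputable def evalLeft (R' : P ⊗[k] A) : Module.Dual k P →ₗ[k] A :=
  (TensorProduct.lid k A).toLinearMap ∘ₗ LinearMap.applyₗ R' ∘ₗ LinearMap.rTensorHom A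

end Eval

section Proof6Aux

variable {k : Type*} [Field k]

section ModAux

variable {M N M' N' : Type*} [AddCommGroup M] [Module k M] [AddCommGroup N] [Module k N]
  [AddCommGroup M'] [Module k M'] [AddCommGroup N'] [Module k N']

lemma evalLeft_apply (x : M ⊗[k] N) (pd : Module.Dual k M) :
    evalLeft x pd = TensorProduct.lid k N (pd.rTensor N x) := rfl

@[simp] lemma evalLeft_tmul (p : M) (n : N) (pd : Module.Dual k M) :
    evalLeft (p ⊗ₜ[k] n) pd = pd p • n := by
  simp [evalLeft_apply]

@[simp] lemma evalLeft_add (u v : M ⊗[k] N) (pd : Module.Dual k M) :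
    evalLeft (u + v) pd = evalLeft u pd + evalLeft v pd := by
  simp [evalLeft_apply]

@[simp] lemma evalLeft_zero (pd : Module.Dual k M) :
    evalLeft (0 : M ⊗[k] N) pd = 0 := by simp [evalLeft_apply]

lemma tensor_map_injective {f : M →ₗ[k] M'} {g : N →ₗ[k] N'}
    (hf : Function.Injective f) (hg : Function.Injective g) :
    Function.Injective (TensorProduct.map f g) := by
  rw [← LinearMap.lTensor_comp_rTensor]
  exact (Module.Flat.lTensor_preserves_injective_linearMap g hg).comp
    (Module.Flat.rTensor_preserves_injective_linearMap f hf)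

lemma dual_pairing_eq (x : M ⊗[k] N) (pd : Module.Dual k M) (nd : Module.Dual k N) :
    nd (evalLeft x pd) = pd (TensorProduct.rid k M (nd.lTensor M x)) := by
  induction x using TensorProduct.induction_on with
  | zero => simp
  | tmul p n => simp [mul_comm]
  | add u v hu hv => simp [hu, hv]

lemma evalLeft_rTensor (φ : M →ₗ[k] M') (x : M ⊗[k] N) (μ : Module.Dual k M') :
    evalLeft (φ.rTensor N x) μ = evalLeft x (μ ∘ₗ φ) := by
  simp [evalLeft_apply, ← LinearMap.rTensor_comp_apply]

lemma map_fst_eq (φ : M →ₗ[k] M') (x : M ⊗[k] N) (nd : Module.Dual k N) :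
    TensorProduct.rid k M' (nd.lTensor M' (φ.rTensor N x)) =
      φ (TensorProduct.rid k M (nd.lTensor M x)) := by
  induction x using TensorProduct.induction_on with
  | zero => simp
  | tmul p n => simp
  | add u v hu hv => simp [hu, hv]

end ModAux

section AlgAux

variable {A : Type*} [Ring A] [Algebra k A] {P : Type*} [Ring P] [Algebra k P]

lemma algMap_eq {B C B' C' : Type*} [Ring B] [Algebra k B] [Ring C] [Algebra k C]
    [Ring B'] [Algebra k B'] [Ring C'] [Algebra k C'] (f : B →ₐ[k] B') (g : C →ₐ[k] C')
    (x : B ⊗[k] C) :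
    Algebra.TensorProduct.map f g x = TensorProduct.map f.toLinearMap g.toLinearMap x := by
  induction x using TensorProduct.induction_on with
  | zero => simp
  | tmul b c => rfl
  | add u v hu hv => simp [hu, hv]

lemma algMap_injective {B C B' C' : Type*} [Ring B] [Algebra k B] [Ring C] [Algebra k C]
    [Ring B'] [Algebra k B'] [Ring C'] [Algebra k C'] {f : B →ₐ[k] B'} {g : C →ₐ[k] C'}
    (hf : Function.Injective f) (hg : Function.Injective g) :
    Function.Injective (Algebra.TensorProduct.map f g) := by
  have h := tensor_map_injective (f := f.toLinearMap) (g := g.toLinearMap) hf hg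
  intro a b hab
  apply h
  rw [← algMap_eq, ← algMap_eq]
  exact hab

variable (k A P) in
/-- `p ⊗ a ↦ (p ⊗ 1) ⊗ a` -/
noncomputable def m13A : P ⊗[k] A →ₐ[k] (P ⊗[k] P) ⊗[k] A :=
  Algebra.TensorProduct.map Algebra.TensorProduct.includeLeft (AlgHom.id k A)

variable (k A P) in
/-- `p ⊗ a ↦ (1 ⊗ p) ⊗ a` -/
noncomputable def m23A : P ⊗[k] A →ₐ[k] (P ⊗[k] P) ⊗[k] A :=
  Algebra.TensorProduct.map Algebra.TensorProduct.includeRight (AlgHom.id k A)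

variable (k A P) in
/-- `p ⊗ a ↦ p ⊗ (a ⊗ 1)` -/
noncomputable def n12A : P ⊗[k] A →ₐ[k] P ⊗[k] (A ⊗[k] A) :=
  Algebra.TensorProduct.map (AlgHom.id k P) Algebra.TensorProduct.includeLeft

variable (k A P) in
/-- `p ⊗ a ↦ p ⊗ (1 ⊗ a)` -/
noncomputable def n13A : P ⊗[k] A →ₐ[k] P ⊗[k] (A ⊗[k] A) :=
  Algebra.TensorProduct.map (AlgHom.id k P) Algebra.TensorProduct.includeRight

@[simp] lemma m13A_tmul (p : P) (a : A) :
    m13A k A P (p ⊗ₜ[k] a) = (p ⊗ₜ[k] (1 : P)) ⊗ₜ[k] a := by simp [m13A]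

@[simp] lemma m23A_tmul (p : P) (a : A) :
    m23A k A P (p ⊗ₜ[k] a) = ((1 : P) ⊗ₜ[k] p) ⊗ₜ[k] a := by simp [m23A]

@[simp] lemma n12A_tmul (p : P) (a : A) :
    n12A k A P (p ⊗ₜ[k] a) = p ⊗ₜ[k] (a ⊗ₜ[k] (1 : A)) := by simp [n12A]

@[simp] lemma n13A_tmul (p : P) (a : A) :
    n13A k A P (p ⊗ₜ[k] a) = p ⊗ₜ[k] ((1 : A) ⊗ₜ[k] a) := by simp [n13A]

variable (ιA : P →ₐ[k] A)

variable (k A P) in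
/-- `ι ⊗ id : P ⊗ A → A ⊗ A` -/
noncomputable def J2A : P ⊗[k] A →ₐ[k] A ⊗[k] A :=
  Algebra.TensorProduct.map ιA (AlgHom.id k A)

variable (k A P) in
/-- `ι ⊗ id ⊗ id : P ⊗ (A ⊗ A) → A ⊗ (A ⊗ A)` -/
noncomputable def J3A : P ⊗[k] (A ⊗[k] A) →ₐ[k] A ⊗[k] (A ⊗[k] A) :=
  Algebra.TensorProduct.map ιA (AlgHom.id k (A ⊗[k] A))

variable (k A P) in
/-- `(ι ⊗ ι) ⊗ id : (P ⊗ P) ⊗ A → (A ⊗ A) ⊗ A` -/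
noncomputable def J4A : (P ⊗[k] P) ⊗[k] A →ₐ[k] (A ⊗[k] A) ⊗[k] A :=
  Algebra.TensorProduct.map (Algebra.TensorProduct.map ιA ιA) (AlgHom.id k A)

lemma J2A_injective (hι : Function.Injective ιA) : Function.Injective (J2A k A P ιA) :=
  algMap_injective hι fun _ _ h => h

lemma J3A_injective (hι : Function.Injective ιA) : Function.Injective (J3A k A P ιA) :=
  algMap_injective hι fun _ _ h => h

lemma J4A_injective (hι : Function.Injective ιA) : Function.Injective (J4A k A P ιA) :=
  algMap_injective (algMap_injective hι hι) fun _ _ h => h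

lemma J3A_n12A (x : P ⊗[k] A) :
    J3A k A P ιA (n12A k A P x) = leg12 k A (J2A k A P ιA x) := by
  induction x using TensorProduct.induction_on with
  | zero => simp
  | tmul p a => simp [J3A, J2A, leg12]
  | add u v hu hv => simp [hu, hv]

lemma J3A_n13A (x : P ⊗[k] A) :
    J3A k A P ιA (n13A k A P x) = leg13 k A (J2A k A P ιA x) := by
  induction x using TensorProduct.induction_on with
  | zero => simp
  | tmul p a => simp [J3A, J2A, leg13]
  | add u v hu hv => simp [hu, hv]

lemma J3A_includeRight (u : A ⊗[k] A) :
    J3A k A P ιA ((Algebra.TensorProduct.includeRight :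
      A ⊗[k] A →ₐ[k] P ⊗[k] (A ⊗[k] A)) u) = leg23 k A u := by
  simp [J3A, leg23]

lemma J4A_m13A (x : P ⊗[k] A) :
    J4A k A P ιA (m13A k A P x) = m13A k A A (J2A k A P ιA x) := by
  induction x using TensorProduct.induction_on with
  | zero => simp
  | tmul p a => simp [J4A, J2A]
  | add u v hu hv => simp [hu, hv]

lemma J4A_m23A (x : P ⊗[k] A) :
    J4A k A P ιA (m23A k A P x) = m23A k A A (J2A k A P ιA x) := by
  induction x using TensorProduct.induction_on with
  | zero => simp
  | tmul p a => simp [J4A, J2A]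
  | add u v hu hv => simp [hu, hv]

lemma assoc_includeLeft (u : A ⊗[k] A) :
    Algebra.TensorProduct.assoc k k k A A A
      ((Algebra.TensorProduct.includeLeft : A ⊗[k] A →ₐ[k] (A ⊗[k] A) ⊗[k] A) u)
      = leg12 k A u := by
  induction u using TensorProduct.induction_on with
  | zero => simp
  | tmul x y => simp [leg12]
  | add u v hu hv => rw [map_add, map_add, map_add, hu, hv]

lemma assoc_m13A (u : A ⊗[k] A) :
    Algebra.TensorProduct.assoc k k k A A A (m13A k A A u) = leg13 k A u := by
  induction u using TensorProduct.induction_on with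
  | zero => simp
  | tmul x y => simp [leg13]
  | add u v hu hv => simp [hu, hv]

lemma assoc_m23A (u : A ⊗[k] A) :
    Algebra.TensorProduct.assoc k k k A A A (m23A k A A u) = leg23 k A u := by
  induction u using TensorProduct.induction_on with
  | zero => simp
  | tmul x y => simp [leg23]
  | add u v hu hv => simp [hu, hv]

lemma pentagon_assoc {R : A ⊗[k] A} (hpent : IsPentagon R) :
    (Algebra.TensorProduct.includeLeft : A ⊗[k] A →ₐ[k] (A ⊗[k] A) ⊗[k] A) R *
        m13A k A A R * m23A k A A R =
      m23A k A A R *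
        (Algebra.TensorProduct.includeLeft : A ⊗[k] A →ₐ[k] (A ⊗[k] A) ⊗[k] A) R := by
  apply (Algebra.TensorProduct.assoc k k k A A A).injective
  simp only [map_mul, assoc_includeLeft, assoc_m13A, assoc_m23A]
  exact hpent

lemma pentagonN {R : A ⊗[k] A} (hpent : IsPentagon R) (hι : Function.Injective ιA)
    {R' : P ⊗[k] A} (hJR : J2A k A P ιA R' = R) :
    n12A k A P R' * n13A k A P R' *
        (Algebra.TensorProduct.includeRight : A ⊗[k] A →ₐ[k] P ⊗[k] (A ⊗[k] A)) R =
      (Algebra.TensorProduct.includeRight : A ⊗[k] A →ₐ[k] P ⊗[k] (A ⊗[k] A)) R *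
        n12A k A P R' := by
  apply J3A_injective ιA hι
  simp only [map_mul, J3A_n12A, J3A_n13A, J3A_includeRight, hJR]
  exact hpent

lemma evalLeft_conj (S T : A ⊗[k] A) (z : P ⊗[k] (A ⊗[k] A)) (pd : Module.Dual k P) :
    evalLeft ((Algebra.TensorProduct.includeRight :
        A ⊗[k] A →ₐ[k] P ⊗[k] (A ⊗[k] A)) S * z *
      (Algebra.TensorProduct.includeRight :
        A ⊗[k] A →ₐ[k] P ⊗[k] (A ⊗[k] A)) T) pd = S * evalLeft z pd * T := by
  induction z using TensorProduct.induction_on with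
  | zero => simp
  | tmul p u =>
      simp [Algebra.TensorProduct.tmul_mul_tmul, mul_smul_comm, smul_mul_assoc]
  | add u v hu hv =>
      simp only [mul_add, add_mul, evalLeft_add, hu, hv]

lemma evalLeft_n12A (x : P ⊗[k] A) (pd : Module.Dual k P) :
    evalLeft (n12A k A P x) pd = evalLeft x pd ⊗ₜ[k] (1 : A) := by
  induction x using TensorProduct.induction_on with
  | zero => simp
  | tmul p a => simp [TensorProduct.smul_tmul']
  | add u v hu hv => simp [TensorProduct.add_tmul, hu, hv]

lemma evalLeft_n12_n13 (x y : P ⊗[k] A) (pd : Module.Dual k P) :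
    evalLeft (n12A k A P x * n13A k A P y) pd =
      evalLeft (TensorProduct.tensorTensorTensorComm k P A P A (x ⊗ₜ[k] y))
        (pd ∘ₗ LinearMap.mul' k P) := by
  induction x using TensorProduct.induction_on with
  | zero => simp [TensorProduct.zero_tmul]
  | tmul p a =>
      induction y using TensorProduct.induction_on with
      | zero => simp [TensorProduct.tmul_zero]
      | tmul q b => simp [Algebra.TensorProduct.tmul_mul_tmul]
      | add u v hu hv =>
          simp only [map_add, mul_add, TensorProduct.tmul_add, evalLeft_add, hu, hv]
  | add u v hu hv =>
      simp only [map_add, add_mul, TensorProduct.add_tmul, evalLeft_add, hu, hv]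

lemma evalLeft_ttt_dualDistrib (c : Module.Dual k P ⊗[k] Module.Dual k P)
    (x y : P ⊗[k] A) :
    evalLeft (TensorProduct.tensorTensorTensorComm k P A P A (x ⊗ₜ[k] y))
        (TensorProduct.dualDistrib k P P c) =
      TensorProduct.map (evalLeft x) (evalLeft y) c := by
  induction c using TensorProduct.induction_on with
  | zero => simp
  | tmul γ δ =>
      simp only [TensorProduct.map_tmul]
      induction x using TensorProduct.induction_on with
      | zero => simp [TensorProduct.zero_tmul]
      | tmul p a =>
          induction y using TensorProduct.induction_on with
          | zero => simp [TensorProduct.tmul_zero]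
          | tmul q b =>
              simp [TensorProduct.dualDistrib_apply, TensorProduct.smul_tmul',
                smul_smul, mul_comm]
          | add u v hu hv =>
              simp only [map_add, TensorProduct.tmul_add, evalLeft_add, hu, hv]
      | add u v hu hv =>
          simp only [map_add, TensorProduct.add_tmul, evalLeft_add, hu, hv]
  | add u v hu hv => simp [hu, hv]

lemma evalLeft_m13_m23 (x y : P ⊗[k] A) (pd qd : Module.Dual k P) :
    evalLeft (m13A k A P x * m23A k A P y) (TensorProduct.dualDistrib k P P (pd ⊗ₜ[k] qd)) =
      evalLeft x pd * evalLeft y qd := by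
  induction x using TensorProduct.induction_on with
  | zero => simp
  | tmul p a =>
      induction y using TensorProduct.induction_on with
      | zero => simp
      | tmul q b =>
          simp [Algebra.TensorProduct.tmul_mul_tmul, TensorProduct.dualDistrib_apply,
            smul_mul_assoc, mul_smul_comm, smul_smul, mul_comm]
      | add u v hu hv =>
          simp only [map_add, mul_add, evalLeft_add, hu, hv]
  | add u v hu hv =>
      simp only [map_add, add_mul, evalLeft_add, hu, hv]

end AlgAux

section BiAux

variable {A : Type*} [Ring A] [Algebra k A] {P : Type*} [Ring P] [Bialgebra k P]
variable (ιA : P →ₐ[k] A)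

lemma J4A_rTensor_comul {R : A ⊗[k] A}
    (hcm : ∀ p : P, TensorProduct.map ιA.toLinearMap ιA.toLinearMap (Coalgebra.comul p) =
      Ring.inverse R * ((1 : A) ⊗ₜ[k] ιA p) * R)
    (x : P ⊗[k] A) :
    J4A k A P ιA ((Coalgebra.comul (R := k) (A := P)).rTensor A x) =
      (Algebra.TensorProduct.includeLeft : A ⊗[k] A →ₐ[k] (A ⊗[k] A) ⊗[k] A)
          (Ring.inverse R) *
        m23A k A A (J2A k A P ιA x) *
        (Algebra.TensorProduct.includeLeft : A ⊗[k] A →ₐ[k] (A ⊗[k] A) ⊗[k] A) R := by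
  induction x using TensorProduct.induction_on with
  | zero => simp
  | tmul p a =>
      have h1 : J4A k A P ιA (Coalgebra.comul (R := k) p ⊗ₜ[k] a) =
          (TensorProduct.map ιA.toLinearMap ιA.toLinearMap (Coalgebra.comul p)) ⊗ₜ[k] a := by
        rw [J4A, Algebra.TensorProduct.map_tmul, algMap_eq]
        rfl
      rw [LinearMap.rTensor_tmul, h1, hcm]
      simp [J2A, Algebra.TensorProduct.tmul_mul_tmul]
  | add u v hu hv => simp [mul_add, add_mul, hu, hv]

lemma core_comul {R : A ⊗[k] A} (hinv : IsUnit R) (hpent : IsPentagon R)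
    (hι : Function.Injective ιA)
    (hcm : ∀ p : P, TensorProduct.map ιA.toLinearMap ιA.toLinearMap (Coalgebra.comul p) =
      Ring.inverse R * ((1 : A) ⊗ₜ[k] ιA p) * R)
    {R' : P ⊗[k] A} (hJR : J2A k A P ιA R' = R) :
    (Coalgebra.comul (R := k) (A := P)).rTensor A R' = m13A k A P R' * m23A k A P R' := by
  apply J4A_injective ιA hι
  rw [map_mul, J4A_m13A, J4A_m23A, hJR, J4A_rTensor_comul ιA hcm, hJR]
  have hp := pentagon_assoc (k := k) (A := A) hpent
  set iL : A ⊗[k] A →ₐ[k] (A ⊗[k] A) ⊗[k] A := Algebra.TensorProduct.includeLeft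
  have h1 : iL (Ring.inverse R) * iL R = 1 := by
    rw [← map_mul, Ring.inverse_mul_cancel _ hinv, map_one]
  calc iL (Ring.inverse R) * m23A k A A R * iL R
      = iL (Ring.inverse R) * (m23A k A A R * iL R) := by rw [mul_assoc]
    _ = iL (Ring.inverse R) * (iL R * (m13A k A A R * m23A k A A R)) := by
        rw [← hp, mul_assoc]
    _ = iL (Ring.inverse R) * iL R * (m13A k A A R * m23A k A A R) := by rw [mul_assoc]
    _ = m13A k A A R * m23A k A A R := by rw [h1, one_mul]

variable (k A P) in
/-- `(ε ⊗ id) ⊗ id : (P ⊗ P) ⊗ A → P ⊗ A` -/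
noncomputable def PhiA : (P ⊗[k] P) ⊗[k] A →ₐ[k] P ⊗[k] A :=
  Algebra.TensorProduct.map
    ((Algebra.TensorProduct.lid k P).toAlgHom.comp
      (Algebra.TensorProduct.map (Bialgebra.counitAlgHom k P) (AlgHom.id k P)))
    (AlgHom.id k A)

lemma PhiA_m13A (x : P ⊗[k] A) :
    PhiA k A P (m13A k A P x) =
      (1 : P) ⊗ₜ[k] evalLeft x (Coalgebra.counit (R := k) (A := P)) := by
  induction x using TensorProduct.induction_on with
  | zero => simp
  | tmul p a =>
      simp [PhiA, Bialgebra.counitAlgHom, TensorProduct.smul_tmul']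
  | add u v hu hv => simp [TensorProduct.tmul_add, hu, hv]

lemma PhiA_m23A (x : P ⊗[k] A) : PhiA k A P (m23A k A P x) = x := by
  induction x using TensorProduct.induction_on with
  | zero => simp
  | tmul p a => simp [PhiA, Bialgebra.counitAlgHom]
  | add u v hu hv => simp [hu, hv]

lemma PhiA_rTensor_comul (x : P ⊗[k] A) :
    PhiA k A P ((Coalgebra.comul (R := k) (A := P)).rTensor A x) = x := by
  induction x using TensorProduct.induction_on with
  | zero => simp
  | tmul p a =>
      rw [LinearMap.rTensor_tmul, PhiA, Algebra.TensorProduct.map_tmul]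
      have h1 : (Algebra.TensorProduct.map (Bialgebra.counitAlgHom k P) (AlgHom.id k P))
          (Coalgebra.comul (R := k) p) =
          (Coalgebra.counit (R := k) (A := P)).rTensor P (Coalgebra.comul (R := k) p) := by
        rw [algMap_eq]
        rfl
      rw [AlgHom.comp_apply, h1, Coalgebra.rTensor_counit_comul]
      simp
  | add u v hu hv => simp [hu, hv]

end BiAux

end Proof6Aux

/-- **Statement 6.** Let `R ∈ A ⊗ A` be a unitary invertible solution of the pentagon
equation, `P` an abstract copy of the Hopf algebra `P(A,R)` (realized inside `A` by `ι`, with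
`R' ∈ P ⊗ A` the lift of `R` along `ι ⊗ id`).  Then the map `f : P* → H`,
`f(p*) = ∑ ⟨p*, R¹⟩R²`, is an isomorphism of Hopf algebras from the dual Hopf algebra `P*`
(convolution algebra, comultiplication dual to the multiplication of `P`) onto
`H = H(A,R) = R_(r)` (with the multiplication of `A` and comultiplication
`Δ_H(y) = R(y⊗1)R⁻¹`). -/
theorem dual_of_P_is_H
    {k : Type u} [Field k] {A : Type v} [Ring A] [Algebra k A]
    {P : Type w} [Ring P] [HopfAlgebra k P] [FiniteDimensional k P]
    (R : A ⊗[k] A) (hinv : IsUnit R) (hpent : IsPentagon R) (huni : IsUnitary R)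
    (iota : P →ₗ[k] A) (hiota : RealizesP R iota)
    (R' : P ⊗[k] A) (hR' : TensorProduct.map iota LinearMap.id R' = R) :
    Function.Injective (evalLeft R') ∧
    LinearMap.range (evalLeft R') = rCoefs R ∧
    evalLeft R' (Coalgebra.counit (R := k) (A := P)) = 1 ∧
    (∀ pd qd : Module.Dual k P,
      evalLeft R' (convMul k P (pd ⊗ₜ[k] qd)) = evalLeft R' pd * evalLeft R' qd) ∧
    (∀ (pd : Module.Dual k P) (c : Module.Dual k P ⊗[k] Module.Dual k P),
      TensorProduct.dualDistrib k P P c = pd ∘ₗ LinearMap.mul' k P →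
      TensorProduct.map (evalLeft R') (evalLeft R') c =
        R * (evalLeft R' pd ⊗ₜ[k] (1 : A)) * Ring.inverse R) := by
  obtain ⟨hinj, hrange, hone, hmul, hcomul⟩ := hiota
  set ιA : P →ₐ[k] A := AlgHom.ofLinearMap iota hone hmul with hιA
  have hι : Function.Injective ιA := hinj
  have hιlin : ιA.toLinearMap = iota := rfl
  have hR2 : iota.rTensor A R' = R := hR'
  have hJR : J2A k A P ιA R' = R := by
    rw [J2A, algMap_eq]
    exact hR'
  have hcm : ∀ p : P, TensorProduct.map ιA.toLinearMap ιA.toLinearMap (Coalgebra.comul p) =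
      Ring.inverse R * ((1 : A) ⊗ₜ[k] ιA p) * R := fun p => hcomul p
  have hcore := core_comul ιA hinv hpent hι hcm hJR
  refine ⟨?_, ?_, ?_, ?_, ?_⟩
  · -- injectivity
    intro pd qd h
    ext p
    obtain ⟨ad, had⟩ : ∃ ad : Module.Dual k A, TensorProduct.rid k P (ad.lTensor P R') = p := by
      have hp : iota p ∈ lCoefs R := by rw [← hrange]; exact ⟨p, rfl⟩
      obtain ⟨ad, had⟩ := hp
      refine ⟨ad, hinj ?_⟩
      calc iota (TensorProduct.rid k P (ad.lTensor P R'))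
          = TensorProduct.rid k A (ad.lTensor A (iota.rTensor A R')) :=
            (map_fst_eq iota R' ad).symm
        _ = lCoefMap R ad := by rw [hR2]; rfl
        _ = iota p := had
    calc pd p = pd (TensorProduct.rid k P (ad.lTensor P R')) := by rw [had]
      _ = ad (evalLeft R' pd) := (dual_pairing_eq R' pd ad).symm
      _ = ad (evalLeft R' qd) := by rw [h]
      _ = qd p := by rw [dual_pairing_eq, had]
  · -- range
    have hre : ∀ ad : Module.Dual k A, rCoefMap R ad = evalLeft R' (ad ∘ₗ iota) := by
      intro ad
      rw [← evalLeft_rTensor iota R' ad, hR2]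
      rfl
    apply le_antisymm
    · rintro a ⟨pd, rfl⟩
      obtain ⟨g, hg⟩ := iota.exists_leftInverse_of_injective (LinearMap.ker_eq_bot.mpr hinj)
      have hpd : (pd ∘ₗ g) ∘ₗ iota = pd := by
        rw [LinearMap.comp_assoc, hg, LinearMap.comp_id]
      exact ⟨pd ∘ₗ g, by rw [hre, hpd]⟩
    · rintro a ⟨ad, rfl⟩
      exact ⟨ad ∘ₗ iota, (hre ad).symm⟩
  · -- counit
    have h3 : R' = ((1 : P) ⊗ₜ[k] evalLeft R' (Coalgebra.counit (R := k) (A := P))) * R' := by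
      conv_lhs => rw [← PhiA_rTensor_comul (A := A) R']
      rw [hcore, map_mul, PhiA_m13A, PhiA_m23A]
    have h3A : R = ((1 : A) ⊗ₜ[k] evalLeft R' (Coalgebra.counit (R := k) (A := P))) * R := by
      have h4 := congrArg (J2A k A P ιA) h3
      rw [map_mul, hJR] at h4
      have h5 : J2A k A P ιA ((1 : P) ⊗ₜ[k] evalLeft R' (Coalgebra.counit (R := k) (A := P)))
          = (1 : A) ⊗ₜ[k] evalLeft R' (Coalgebra.counit (R := k) (A := P)) := by
        simp [J2A]
      rw [h5] at h4
      exact h4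
    have h6 : (1 : A) ⊗ₜ[k] evalLeft R' (Coalgebra.counit (R := k) (A := P)) = 1 := by
      calc (1 : A) ⊗ₜ[k] evalLeft R' (Coalgebra.counit (R := k) (A := P))
          = ((1 : A) ⊗ₜ[k] evalLeft R' (Coalgebra.counit (R := k) (A := P))) *
              (R * Ring.inverse R) := by rw [Ring.mul_inverse_cancel _ hinv, mul_one]
        _ = (((1 : A) ⊗ₜ[k] evalLeft R' (Coalgebra.counit (R := k) (A := P))) * R) *
              Ring.inverse R := by rw [mul_assoc]
        _ = R * Ring.inverse R := by rw [← h3A]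
        _ = 1 := Ring.mul_inverse_cancel _ hinv
    rcases subsingleton_or_nontrivial A with hA | hA
    · exact Subsingleton.elim _ _
    · have hone_inj : Function.Injective (fun a : A => (1 : A) ⊗ₜ[k] a) := by
        have h1 : Function.Injective (Algebra.linearMap k A) := by
          intro x y hxy
          exact (algebraMap k A).injective hxy
        have h2 := Module.Flat.rTensor_preserves_injective_linearMap (M := A)
          (Algebra.linearMap k A) h1
        intro a b hab
        have h7 : (Algebra.linearMap k A).rTensor A ((TensorProduct.lid k A).symm a) =
            (Algebra.linearMap k A).rTensor A ((TensorProduct.lid k A).symm b) := by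
          simp only [TensorProduct.lid_symm_apply, LinearMap.rTensor_tmul,
            Algebra.linearMap_apply, map_one]
          exact hab
        exact (TensorProduct.lid k A).symm.injective (h2 h7)
      exact hone_inj (h6.trans Algebra.TensorProduct.one_def)
  · -- multiplicativity
    intro pd qd
    have hc : convMul k P (pd ⊗ₜ[k] qd) =
        (TensorProduct.dualDistrib k P P (pd ⊗ₜ[k] qd)) ∘ₗ
          (Coalgebra.comul (R := k) (A := P)) := rfl
    rw [hc, ← evalLeft_rTensor, hcore, evalLeft_m13_m23]
  · -- comultiplicativity
    intro pd c hc
    have h5 := pentagonN ιA hpent hι hJR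
    set iR : A ⊗[k] A →ₐ[k] P ⊗[k] (A ⊗[k] A) := Algebra.TensorProduct.includeRight
    have hrel : iR R * n12A k A P R' * iR (Ring.inverse R) = n12A k A P R' * n13A k A P R' := by
      rw [← h5, mul_assoc, ← map_mul, Ring.mul_inverse_cancel _ hinv, map_one, mul_one]
    calc TensorProduct.map (evalLeft R') (evalLeft R') c
        = evalLeft (TensorProduct.tensorTensorTensorComm k P A P A (R' ⊗ₜ[k] R'))
            (TensorProduct.dualDistrib k P P c) := (evalLeft_ttt_dualDistrib c R' R').symm
      _ = evalLeft (TensorProduct.tensorTensorTensorComm k P A P A (R' ⊗ₜ[k] R'))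
            (pd ∘ₗ LinearMap.mul' k P) := by rw [hc]
      _ = evalLeft (n12A k A P R' * n13A k A P R') pd := (evalLeft_n12_n13 R' R' pd).symm
      _ = evalLeft (iR R * n12A k A P R' * iR (Ring.inverse R)) pd := by rw [hrel]
      _ = R * evalLeft (n12A k A P R') pd * Ring.inverse R := evalLeft_conj R (Ring.inverse R) _ pd
      _ = R * (evalLeft R' pd ⊗ₜ[k] (1 : A)) * Ring.inverse R := by rw [evalLeft_n12A]

end PentagonPaper
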